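/- Let U be a real normed vector space, M, N ∈ ℕ, and for each multi-index k ∈ ℕ^M with |k| ≤ N let L_k : U → U be a continuous linear map. Suppose that for each multi-index n with |n| ≤ N there are functions u_n : ℝ → U (differentiable) and r_n : ℝ → U satisfying, for all t, u_n′(t) = Σ_{|k| ≤ N−|n|} L_k u_{n+k}(t) + r_n(t). Define the U-valued polynomial of degree ≤ N, ũ(t), by its coefficient family (ξⁿ/n!-coefficient equal to u_n(t)). Then ũ is differentiable coefficient-wise and satisfies, as an identity of U-valued polynomials for every t, ∂ₜũ(t) = Σ_{|k| ≤ N} L_k ∂_ξ^k ũ(t) + r̃(t), where r̃(t) is the U-valued polynomial whose ξⁿ/n!-coefficient is r_n(t) and L_k acts on a polynomial coefficient-wise. -/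

import Mathlib

/-- total degree `|n| = n₁ + ⋯ + n_M` of a multi-index. -/
def mdeg {M : ℕ} (n : Fin M → ℕ) : ℕ := ∑ i, n i

/-- multi-index factorial `n! = n₁!⋯n_M!`. -/
def mfact {M : ℕ} (n : Fin M → ℕ) : ℕ := ∏ i, Nat.factorial (n i)

/-- the finite set of multi-indices in `ℕ^M` of total degree at most `d`. -/
def mIdxLe (M d : ℕ) : Finset (Fin M → ℕ) :=
  (Fintype.piFinset fun _ : Fin M => Finset.range (d + 1)).filter fun n => mdeg n ≤ d

/-- the finite set of multi-indices `k ≤ n` (componentwise). -/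
def mIic {M : ℕ} (n : Fin M → ℕ) : Finset (Fin M → ℕ) :=
  Fintype.piFinset fun i => Finset.range (n i + 1)

/-- A `U`-valued polynomial of degree ≤ N in `ξ ∈ ℝ^M` is represented by its family of
`ξ^k`-coefficients (zero beyond degree `N`).  `pder ℓ` is the formal derivative `∂_ξ^ℓ`,
sending the coefficient family `c` to the one whose `ξ^k`-coefficient is
`((k+ℓ)!/k!) c_{k+ℓ}`. -/
noncomputable def pder {M : ℕ} {U : Type*} [AddCommGroup U] [Module ℝ U]
    (ℓ : Fin M → ℕ) (c : (Fin M → ℕ) → U) : (Fin M → ℕ) → U :=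
  fun k => ((mfact (k + ℓ) : ℝ) / (mfact k : ℝ)) • c (k + ℓ)

/-- the `U`-valued polynomial of degree ≤ N whose `ξⁿ/n!`-coefficient is `u_n`, i.e. whose
`ξⁿ`-coefficient is `u_n/n!` for `|n| ≤ N` and `0` otherwise. -/
noncomputable def genPoly {M : ℕ} {U : Type*} [AddCommGroup U] [Module ℝ U]
    (N : ℕ) (u : (Fin M → ℕ) → U) : (Fin M → ℕ) → U :=
  fun n => if mdeg n ≤ N then ((mfact n : ℝ))⁻¹ • u n else 0

/-- If the local Taylor coefficients `u_n` satisfy the exact ODEs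
`u_n′ = Σ_{|k| ≤ N−|n|} L_k u_{n+k} + r_n`, then the generating multinomial `ũ`
satisfies (coefficient-wise) the PDE `∂ₜũ = Σ_{|k| ≤ N} L_k ∂_ξ^k ũ + r̃`. -/

lemma mem_mIdxLe {M d : ℕ} {k : Fin M → ℕ} : k ∈ mIdxLe M d ↔ mdeg k ≤ d := by
  constructor
  · intro h
    exact (Finset.mem_filter.mp h).2
  · intro h
    refine Finset.mem_filter.mpr ⟨Fintype.mem_piFinset.mpr fun i => ?_, h⟩
    rw [Finset.mem_range, Nat.lt_succ_iff]
    exact le_trans (Finset.single_le_sum (fun j _ => Nat.zero_le _) (Finset.mem_univ i)) h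

lemma mdeg_add {M : ℕ} (n k : Fin M → ℕ) : mdeg (n + k) = mdeg n + mdeg k := by
  simp [mdeg, Finset.sum_add_distrib]

lemma mfact_ne_zero {M : ℕ} (n : Fin M → ℕ) : (mfact n : ℝ) ≠ 0 := by
  have : 0 < mfact n := Finset.prod_pos fun i _ => Nat.factorial_pos _
  exact_mod_cast this.ne' 

theorem generating_multinomial_equivalent_dynamics
    {U : Type*} [NormedAddCommGroup U] [NormedSpace ℝ U]
    (M N : ℕ)
    (L : (Fin M → ℕ) → U →L[ℝ] U)
    (u r : (Fin M → ℕ) → ℝ → U)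
    (hu : ∀ n : Fin M → ℕ, mdeg n ≤ N → ∀ t : ℝ,
      HasDerivAt (u n)
        ((∑ k ∈ mIdxLe M (N - mdeg n), L k (u (n + k) t)) + r n t) t) :
    ∀ n : Fin M → ℕ, mdeg n ≤ N → ∀ t : ℝ,
      HasDerivAt (fun s => genPoly N (fun p => u p s) n)
        ((∑ k ∈ mIdxLe M N, L k (pder k (genPoly N (fun p => u p t)) n))
          + genPoly N (fun p => r p t) n) t := by
  intro n hn t
  have h1 : (fun s => genPoly N (fun p => u p s) n) =
      fun s => ((mfact n : ℝ))⁻¹ • u n s := by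
    funext s; simp [genPoly, hn]
  rw [h1]
  have key := (hu n hn t).const_smul ((mfact n : ℝ))⁻¹
  convert key using 1
  · rfl
  rw [smul_add]
  congr 1
  · have hterm : ∀ k : Fin M → ℕ, L k (pder k (genPoly N (fun p => u p t)) n)
        = if mdeg (n + k) ≤ N then ((mfact n : ℝ))⁻¹ • L k (u (n + k) t) else 0 := by
      intro k
      by_cases h : mdeg (n + k) ≤ N
      · simp only [pder, genPoly, h, if_true, smul_smul]
        rw [show (mfact (n + k) : ℝ) / (mfact n : ℝ) * ((mfact (n + k) : ℝ))⁻¹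
            = ((mfact n : ℝ))⁻¹ from by
          field_simp [mfact_ne_zero]; rw [div_mul_cancel_left₀ (mfact_ne_zero _), one_div], map_smul]
      · simp [pder, genPoly, h]
    rw [Finset.smul_sum]
    rw [show (∑ k ∈ mIdxLe M (N - mdeg n), ((mfact n : ℝ))⁻¹ • L k (u (n + k) t))
        = ∑ k ∈ mIdxLe M (N - mdeg n), L k (pder k (genPoly N (fun p => u p t)) n) from
      Finset.sum_congr rfl fun k hk => by
        rw [hterm k, if_pos]
        rw [mdeg_add]
        have := mem_mIdxLe.mp hk; omega]
    symm
    apply Finset.sum_subset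
    · intro k hk
      rw [mem_mIdxLe] at hk ⊢
      exact le_trans hk (Nat.sub_le _ _)
    · intro k hk hk2
      rw [hterm k, if_neg]
      rw [mdeg_add]
      intro hcon
      exact hk2 (mem_mIdxLe.mpr (Nat.le_sub_of_add_le (by omega)))
  · simp [genPoly, hn]
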